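/- Let c₁, …, c_m ∈ ℝ and let Q_c : ℝ^d → ℝ^d map each coordinate x_i to a nearest center: (Q_c(x))_i ∈ argmin_{j}|x_i − c_j|. For λ, η > 0 and y ∈ ℝ^d, consider the proximal problem min_{x ∈ ℝ^d} { (1/(2η))‖x − y‖² + (λ/2) min_{z: z_i ∈ {c₁,…,c_m}} ‖z − x‖₁ }. Then a minimizer x* is given coordinatewise by the soft-thresholding rule: x*_i = y_i − λη/2 if y_i ≥ (Q_c(y))_i + λη/2; x*_i = y_i + λη/2 if y_i ≤ (Q_c(y))_i − λη/2; and x*_i = (Q_c(y))_i otherwise. -/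

import Mathlib

open Finset

set_option maxHeartbeats 1000000 in
private lemma key1 (κ q y a t s : ℝ) (hκ : 0 < κ)
    (hs : s = if q + κ ≤ y then y - κ else if y ≤ q - κ then y + κ else q)
    (hqa : |y - q| ≤ |y - a|) :
    (s - y) ^ 2 + 2 * κ * |q - s| ≤ (t - y) ^ 2 + 2 * κ * |a - t| := by
  split_ifs at hs with hc1 hc2
  · rw [hs, abs_of_nonpos (by linarith)]
    rcases abs_cases (a - t) with ⟨h3, h3'⟩ | ⟨h3, h3'⟩ <;> rw [h3] <;>
    rcases abs_cases (y - q) with ⟨h1, h1'⟩ | ⟨h1, h1'⟩ <;>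
    rcases abs_cases (y - a) with ⟨h2, h2'⟩ | ⟨h2, h2'⟩ <;>
    rw [h1, h2] at hqa <;>
    nlinarith [sq_nonneg (t - y + κ), sq_nonneg (t - y - κ), hκ.le]
  · rw [hs, abs_of_nonneg (by linarith)]
    rcases abs_cases (a - t) with ⟨h3, h3'⟩ | ⟨h3, h3'⟩ <;> rw [h3] <;>
    rcases abs_cases (y - q) with ⟨h1, h1'⟩ | ⟨h1, h1'⟩ <;>
    rcases abs_cases (y - a) with ⟨h2, h2'⟩ | ⟨h2, h2'⟩ <;>
    rw [h1, h2] at hqa <;>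
    nlinarith [sq_nonneg (t - y + κ), sq_nonneg (t - y - κ), hκ.le]
  · rw [hs, sub_self, abs_zero]
    rcases le_or_gt ((q - y) ^ 2) ((t - y) ^ 2) with hcmp | hcmp
    · nlinarith [abs_nonneg (a - t), mul_nonneg hκ.le (abs_nonneg (a - t))]
    · have habs : |t - y| < |q - y| := by
        nlinarith [abs_nonneg (t - y), abs_nonneg (q - y), sq_abs (t - y), sq_abs (q - y)]
      rcases abs_cases (a - t) with ⟨h3, h3'⟩ | ⟨h3, h3'⟩ <;> rw [h3] <;>
      rcases abs_cases (t - y) with ⟨h4, h4'⟩ | ⟨h4, h4'⟩ <;>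
      rcases abs_cases (q - y) with ⟨h5, h5'⟩ | ⟨h5, h5'⟩ <;>
      rw [h4, h5] at habs <;>
      rcases abs_cases (y - q) with ⟨h1, h1'⟩ | ⟨h1, h1'⟩ <;>
      rcases abs_cases (y - a) with ⟨h2, h2'⟩ | ⟨h2, h2'⟩ <;>
      rw [h1, h2] at hqa <;>
      nlinarith [hκ.le, sq_nonneg (t - y), sq_nonneg (q - y)]

/-- The quantization penalty `min_{z : z_i ∈ {c₁,…,c_m}} ‖z − x‖₁`. -/
noncomputable def quantPenalty (d m : ℕ) (c : Fin m → ℝ) (x : Fin d → ℝ) : ℝ :=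
  sInf {s | ∃ z : Fin d → ℝ, (∀ i, ∃ j, z i = c j) ∧ s = ∑ i, |z i - x i|}

/-- The proximal objective `(1/(2η))‖x − y‖² + (λ/2) min_{z ∈ C} ‖z − x‖₁`. -/
noncomputable def proxObj (d m : ℕ) (c : Fin m → ℝ) (η lam : ℝ)
    (y x : Fin d → ℝ) : ℝ :=
  (1 / (2 * η)) * (∑ i, (x i - y i) ^ 2) + lam / 2 * quantPenalty d m c x

/-- The coordinatewise soft-thresholding rule toward the nearest center `Qc y`
solves the proximal quantization problem. -/
theorem prox_quant_soft_threshold (d m : ℕ) (hm : 0 < m) (c : Fin m → ℝ)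
    (η lam : ℝ) (hη : 0 < η) (hlam : 0 < lam)
    (Qc : (Fin d → ℝ) → Fin d → ℝ)
    (hQc : ∀ x i, (∃ j, Qc x i = c j) ∧ ∀ j, |x i - Qc x i| ≤ |x i - c j|)
    (y : Fin d → ℝ)
    (xstar : Fin d → ℝ)
    (hxstar : ∀ i, xstar i =
      if Qc y i + lam * η / 2 ≤ y i then y i - lam * η / 2
      else if y i ≤ Qc y i - lam * η / 2 then y i + lam * η / 2
      else Qc y i) :
    ∀ x : Fin d → ℝ, proxObj d m c η lam y xstar ≤ proxObj d m c η lam y x := by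
  intro x
  have hη2 : (0:ℝ) < 1 / (2 * η) := by positivity
  -- upper bound on quantPenalty at xstar
  have hub : quantPenalty d m c xstar ≤ ∑ i, |Qc y i - xstar i| := by
    apply csInf_le
    · refine ⟨0, fun s hs => ?_⟩
      obtain ⟨z, _, rfl⟩ := hs
      exact Finset.sum_nonneg fun i _ => abs_nonneg _
    · exact ⟨fun i => Qc y i, fun i => (hQc y i).1, rfl⟩
  -- lower bound on quantPenalty at x
  have hlb : ∑ i, |Qc x i - x i| ≤ quantPenalty d m c x := by
    apply le_csInf
    · exact ⟨∑ i, |Qc x i - x i|, fun i => Qc x i, fun i => (hQc x i).1, rfl⟩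
    · rintro s ⟨z, hz, rfl⟩
      refine Finset.sum_le_sum fun i _ => ?_
      obtain ⟨j, hj⟩ := hz i
      rw [abs_sub_comm (Qc x i), abs_sub_comm (z i), hj]
      exact (hQc x i).2 j
  -- per-coordinate inequality
  have hcoord : ∀ i, (xstar i - y i) ^ 2 + lam * η * |Qc y i - xstar i| ≤
      (x i - y i) ^ 2 + lam * η * |Qc x i - x i| := by
    intro i
    have hqa : |y i - Qc y i| ≤ |y i - Qc x i| := by
      obtain ⟨j, hj⟩ := (hQc x i).1
      rw [hj]
      exact (hQc y i).2 j
    have := key1 (lam * η / 2) (Qc y i) (y i) (Qc x i) (x i) (xstar i)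
      (by positivity) (hxstar i) hqa
    calc (xstar i - y i) ^ 2 + lam * η * |Qc y i - xstar i|
        = (xstar i - y i) ^ 2 + 2 * (lam * η / 2) * |Qc y i - xstar i| := by ring_nf
      _ ≤ (x i - y i) ^ 2 + 2 * (lam * η / 2) * |Qc x i - x i| := this
      _ = (x i - y i) ^ 2 + lam * η * |Qc x i - x i| := by ring_nf
  have hsum : ∑ i, ((xstar i - y i) ^ 2 + lam * η * |Qc y i - xstar i|) ≤
      ∑ i, ((x i - y i) ^ 2 + lam * η * |Qc x i - x i|) :=
    Finset.sum_le_sum fun i _ => hcoord i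
  rw [Finset.sum_add_distrib, Finset.sum_add_distrib, ← Finset.mul_sum, ← Finset.mul_sum] at hsum
  unfold proxObj
  have h1 := mul_le_mul_of_nonneg_left hub (le_of_lt (by positivity : (0:ℝ) < lam / 2))
  have h2 := mul_le_mul_of_nonneg_left hlb (le_of_lt (by positivity : (0:ℝ) < lam / 2))
  have h3 := mul_le_mul_of_nonneg_left hsum hη2.le
  have hrw : ∀ S T : ℝ, 1 / (2 * η) * (S + lam * η * T) =
      1 / (2 * η) * S + lam / 2 * T := by
    intro S T; field_simp
  rw [hrw, hrw] at h3
  linarith
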